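/- arXiv:2402.14633 — 2 statements merged into one kernel-verified Lean document; each statement's English description precedes it below -/
import Mathlib

section
/- Let T be a rooted tree, let S be a finite set of nodes sorted in DFS entry-time order as s_1, ..., s_m, and let u = s_a and v = s_b with a < b. Then there exists an index j with a ≤ j < b such that LCA(s_j, s_{j+1}) = LCA(u, v). -/
variable {V : Type} [Fintype V] [DecidableEq V]

/-- `u` is an ancestor of `v` in the tree `G` rooted at `root`:
`u` lies on the unique path from `root` to `v`. -/
def isAncestor (G : SimpleGraph V) (root u v : V) : Prop :=
  G.dist root u + G.dist u v = G.dist root v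

/-- `w` is the lowest common ancestor of `u` and `v`: a common ancestor such that
every common ancestor of `u` and `v` is an ancestor of `w`. -/
def isLCA (G : SimpleGraph V) (root u v w : V) : Prop :=
  isAncestor G root w u ∧ isAncestor G root w v ∧
    ∀ x, isAncestor G root x u → isAncestor G root x v → isAncestor G root x w

/-- `tin` is a DFS entry-time ordering of the tree `G` rooted at `root`:
distinct nodes get distinct times, ancestors are entered no later than their
descendants, and each subtree occupies a contiguous interval of entry times. -/
structure IsDFSOrder (G : SimpleGraph V) (root : V) (tin : V → ℕ) : Prop where
  inj : Function.Injective tin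
  anc_le : ∀ u v, isAncestor G root u v → tin u ≤ tin v
  interval : ∀ w x y z, isAncestor G root w x → isAncestor G root w z →
    tin x ≤ tin y → tin y ≤ tin z → isAncestor G root w y

section Aux

variable {G : SimpleGraph V} {root : V}

lemma anc_trans (hG : G.Connected) {x y z : V}
    (hxy : isAncestor G root x y) (hyz : isAncestor G root y z) :
    isAncestor G root x z := by
  unfold isAncestor at *
  have h1 : G.dist x z ≤ G.dist x y + G.dist y z := hG.dist_triangle
  have h2 : G.dist root z ≤ G.dist root x + G.dist x z := hG.dist_triangle
  omega

lemma anc_antisymm (hG : G.Connected) {x y : V}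
    (hxy : isAncestor G root x y) (hyx : isAncestor G root y x) : x = y := by
  unfold isAncestor at *
  have h : G.dist x y = 0 := by omega
  exact (hG.dist_eq_zero_iff.mp h)

lemma dist_add_dist_le_of_mem_support {u v x : V} (p : G.Walk u v)
    (hx : x ∈ p.support) : G.dist u x + G.dist x v ≤ p.length := by
  have hspec := p.take_spec hx
  have hlen : (p.takeUntil x hx).length + (p.dropUntil x hx).length = p.length := by
    rw [← SimpleGraph.Walk.length_append, hspec]
  have h1 := SimpleGraph.dist_le (p.takeUntil x hx)
  have h2 := SimpleGraph.dist_le (p.dropUntil x hx)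
  omega

/-- Any two ancestors of a common node in a tree are comparable. -/
lemma anc_comparable (hG : G.IsTree) {x y v : V}
    (hx : isAncestor G root x v) (hy : isAncestor G root y v) :
    isAncestor G root x y ∨ isAncestor G root y x := by
  have hconn := hG.isConnected
  obtain ⟨A, hA⟩ := hconn.exists_walk_length_eq_dist root x
  obtain ⟨B, hB⟩ := hconn.exists_walk_length_eq_dist x v
  obtain ⟨A', hA'⟩ := hconn.exists_walk_length_eq_dist root y
  obtain ⟨B', hB'⟩ := hconn.exists_walk_length_eq_dist y v
  set W := A.append B with hW
  set W' := A'.append B' with hW'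
  have hWlen : W.length = G.dist root v := by
    rw [hW, SimpleGraph.Walk.length_append, hA, hB]; exact hx
  have hW'len : W'.length = G.dist root v := by
    rw [hW', SimpleGraph.Walk.length_append, hA', hB']; exact hy
  have hWpath : W.IsPath := W.isPath_of_length_eq_dist hWlen
  have hW'path : W'.IsPath := W'.isPath_of_length_eq_dist hW'len
  have hWeq : W = W' := by
    obtain ⟨p, _, hp⟩ := hG.existsUnique_path root v
    rw [hp W hWpath, hp W' hW'path]
  have hymem : y ∈ W.support := by
    rw [hWeq, hW', SimpleGraph.Walk.mem_support_append_iff]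
    left
    exact SimpleGraph.Walk.end_mem_support A'
  rw [hW, SimpleGraph.Walk.mem_support_append_iff] at hymem
  rcases hymem with hyA | hyB
  · right
    have hle := dist_add_dist_le_of_mem_support A hyA
    rw [hA] at hle
    have htri : G.dist root x ≤ G.dist root y + G.dist y x := hconn.dist_triangle
    unfold isAncestor
    omega
  · left
    have hle := dist_add_dist_le_of_mem_support B hyB
    rw [hB] at hle
    have htri : G.dist x v ≤ G.dist x y + G.dist y v := hconn.dist_triangle
    have hxy : G.dist x y + G.dist y v = G.dist x v := by omega
    unfold isAncestor at *
    omega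

end Aux

/-- the LCA of any two members of a DFS-sorted family is attained
as the LCA of some consecutive pair between them. -/
theorem stmt6 (G : SimpleGraph V) (hG : G.IsTree) (root : V) (tin : V → ℕ)
    (hdfs : IsDFSOrder G root tin)
    (lca : V → V → V) (hlca : ∀ u v, isLCA G root u v (lca u v))
    {m : ℕ} (s : Fin m → V)
    (hmono : ∀ i j : Fin m, i < j → tin (s i) < tin (s j))
    (a b : Fin m) (hab : a < b) :
    ∃ j k : Fin m, a ≤ j ∧ (k : ℕ) = (j : ℕ) + 1 ∧ k ≤ b ∧
      lca (s j) (s k) = lca (s a) (s b) := by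
  have hconn := hG.isConnected
  obtain ⟨n, hn⟩ : ∃ n, (b : ℕ) - (a : ℕ) = n := ⟨_, rfl⟩
  induction n using Nat.strong_induction_on generalizing a with
  | _ n ih =>
  -- c := a + 1
  have hc : (a : ℕ) + 1 < m := lt_of_le_of_lt (Fin.lt_iff_val_lt_val.mp hab) b.isLt
  set c : Fin m := ⟨(a : ℕ) + 1, hc⟩ with hcdef
  have hac : a < c := by simp [Fin.lt_iff_val_lt_val, hcdef]
  have hcb : c ≤ b := by
    simp only [Fin.le_iff_val_le_val, hcdef]
    exact Fin.lt_iff_val_lt_val.mp hab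
  rcases eq_or_lt_of_le hcb with hceq | hclt
  · exact ⟨a, b, le_refl a, by rw [← hceq], le_refl b, by rw [← hceq]⟩
  · -- c < b; set w, p, q
    obtain ⟨hwa, hwb, hwuniv⟩ := hlca (s a) (s b)
    set w := lca (s a) (s b) with hwdef
    have hwc : isAncestor G root w (s c) :=
      hdfs.interval w (s a) (s c) (s b) hwa hwb
        (le_of_lt (hmono a c hac)) (le_of_lt (hmono c b hclt))
    obtain ⟨hpa, hpc, hpuniv⟩ := hlca (s a) (s c)
    obtain ⟨hqc, hqb, hquniv⟩ := hlca (s c) (s b)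
    set p := lca (s a) (s c) with hpdef
    set q := lca (s c) (s b) with hqdef
    rcases anc_comparable hG hpc hqc with hpq | hqp
    · -- p anc q : p = w, take (a, c)
      have hpb : isAncestor G root p (s b) := anc_trans hconn hpq hqb
      have hpw : isAncestor G root p w := hwuniv p hpa hpb
      have hwp : isAncestor G root w p := hpuniv w hwa hwc
      have : p = w := anc_antisymm hconn hpw hwp
      exact ⟨a, c, le_refl a, rfl, le_of_lt hclt, this⟩
    · -- q anc p : q = w, recurse on (c, b)
      have hqa : isAncestor G root q (s a) := anc_trans hconn hqp hpa
      have hqw : isAncestor G root q w := hwuniv q hqa hqb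
      have hwq : isAncestor G root w q := hquniv w hwc hwb
      have hqweq : q = w := anc_antisymm hconn hqw hwq
      have hlt : (b : ℕ) - (c : ℕ) < n := by
        have := Fin.lt_iff_val_lt_val.mp hab
        simp only [hcdef]
        omega
      obtain ⟨j, k, hcj, hk, hkb, heq⟩ := ih _ hlt c hclt rfl
      exact ⟨j, k, le_trans (le_of_lt hac) hcj, hk, hkb, by rw [heq, ← hqdef, hqweq]⟩
end

section
/- Let T be a rooted tree, S an LCA-closed set of nodes sorted in DFS order, and v the currently processed node in the stack-based virtual-tree construction. After popping all stack elements that are not ancestors of v, if the stack is nonempty then its top element u is an ancestor of v and no element of S already processed lies strictly between u and v on the tree path. -/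
variable {V : Type} [Fintype V] [DecidableEq V]

attribute [local instance] Classical.propDecidable

/-- Pop all nodes from the top of the stack (head of the list) that are not
ancestors of `v`. -/
noncomputable def popStack (anc : V → V → Prop) (v : V) : List V → List V
  | [] => []
  | u :: st => if anc u v then u :: st else popStack anc v st

/-- Process the nodes of a list in order: pop non-ancestors of the current node,
then push the current node. The head of the list is the top of the stack. -/
noncomputable def runStack (anc : V → V → Prop) : List V → List V → List V
  | [], st => st
  | v :: rest, st => runStack anc rest (v :: popStack anc v st)

set_option linter.unusedSectionVars false

lemma anc_refl (G : SimpleGraph V) (r u : V) : isAncestor G r u u := by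
  simp [isAncestor]

lemma anc_trans_s15 {G : SimpleGraph V} (hc : G.Connected) {r a b c : V}
    (h1 : isAncestor G r a b) (h2 : isAncestor G r b c) : isAncestor G r a c := by
  unfold isAncestor at *
  have t1 : G.dist a c ≤ G.dist a b + G.dist b c := hc.dist_triangle
  have t2 : G.dist r c ≤ G.dist r a + G.dist a c := hc.dist_triangle
  omega

lemma anc_between {G : SimpleGraph V} (hc : G.Connected) {r u x v : V}
    (h : isAncestor G r u v) (hx : G.dist u x + G.dist x v = G.dist u v) :
    isAncestor G r u x ∧ isAncestor G r x v := by
  unfold isAncestor at *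
  have t1 : G.dist r x ≤ G.dist r u + G.dist u x := hc.dist_triangle
  have t2 : G.dist r v ≤ G.dist r x + G.dist x v := hc.dist_triangle
  omega

lemma anc_antisymm_s15 {G : SimpleGraph V} (hc : G.Connected) {r a b : V}
    (h1 : isAncestor G r a b) (h2 : isAncestor G r b a) : a = b := by
  unfold isAncestor at *
  have : G.dist a b = 0 := by omega
  exact hc.dist_eq_zero_iff.mp this

lemma popStack_subset {anc : V → V → Prop} {v : V} :
    ∀ {st : List V} {z : V}, z ∈ popStack anc v st → z ∈ st := by
  intro st
  induction st with
  | nil => intro z hz; simpa [popStack] using hz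
  | cons h t ih =>
    intro z hz
    rw [popStack] at hz
    by_cases ha : anc h v
    · simpa [ha] using hz
    · simp only [ha, if_false] at hz
      exact List.mem_cons_of_mem _ (ih hz)

lemma popStack_pairwise {anc : V → V → Prop} {v : V} :
    ∀ {st : List V}, st.Pairwise (fun a b => anc b a) →
      (popStack anc v st).Pairwise (fun a b => anc b a) := by
  intro st
  induction st with
  | nil => intro _; simp [popStack]
  | cons h t ih =>
    intro hp
    rw [popStack]
    by_cases ha : anc h v
    · simpa [ha] using hp
    · simp only [ha, if_false]
      exact ih (List.Pairwise.of_cons hp)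

lemma popStack_anc {anc : V → V → Prop}
    (htrans : ∀ a b c, anc a b → anc b c → anc a c) {v : V} :
    ∀ {st : List V}, st.Pairwise (fun a b => anc b a) →
      ∀ {z : V}, z ∈ popStack anc v st → anc z v := by
  intro st
  induction st with
  | nil => intro _ z hz; simp [popStack] at hz
  | cons h t ih =>
    intro hp z hz
    rw [popStack] at hz
    by_cases ha : anc h v
    · simp only [ha, if_true] at hz
      rcases List.mem_cons.mp hz with rfl | hzt
      · exact ha
      · exact htrans _ _ _ ((List.pairwise_cons.mp hp).1 z hzt) ha
    · simp only [ha, if_false] at hz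
      exact ih (List.Pairwise.of_cons hp) hz

lemma mem_popStack {anc : V → V → Prop} {v : V} :
    ∀ {st : List V} {z : V}, z ∈ st → anc z v → z ∈ popStack anc v st := by
  intro st
  induction st with
  | nil => intro z hz; simp at hz
  | cons h t ih =>
    intro z hz ha
    rw [popStack]
    by_cases hh : anc h v
    · simpa [hh] using hz
    · simp only [hh, if_false]
      rcases List.mem_cons.mp hz with rfl | hzt
      · exact absurd ha hh
      · exact ih hzt ha

/-- The invariant maintained by `runStack`. -/
def StackInv (G : SimpleGraph V) (root : V) (tin : V → ℕ) (p st : List V) : Prop :=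
  st.Pairwise (fun a b => isAncestor G root b a) ∧
  (∀ x ∈ st, x ∈ p) ∧
  (∀ y, (∀ x ∈ p, tin x < tin y) → ∀ x ∈ p, isAncestor G root x y →
      x ∈ popStack (isAncestor G root) y st)

lemma runStack_inv (G : SimpleGraph V) (hc : G.Connected) (root : V) (tin : V → ℕ)
    (hdfs : IsDFSOrder G root tin) :
    ∀ (l p st : List V), StackInv G root tin p st →
      ((p ++ l).Pairwise fun a b => tin a < tin b) →
      StackInv G root tin (p ++ l) (runStack (isAncestor G root) l st) := by
  intro l
  induction l with
  | nil => intro p st hinv _; simpa [runStack] using hinv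
  | cons w rest ih =>
    intro p st hinv hs
    obtain ⟨hpw, hsub, hmem⟩ := hinv
    have htrans : ∀ a b c, isAncestor G root a b → isAncestor G root b c →
        isAncestor G root a c := fun a b c h1 h2 => anc_trans_s15 hc h1 h2
    have hplt : ∀ x ∈ p, tin x < tin w := by
      intro x hx
      have := (List.pairwise_append.mp hs).2.2 x hx w List.mem_cons_self
      exact this
    rw [runStack]
    have hstep : StackInv G root tin (p ++ [w])
        (w :: popStack (isAncestor G root) w st) := by
      refine ⟨?_, ?_, ?_⟩
      · refine List.pairwise_cons.mpr ⟨?_, popStack_pairwise hpw⟩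
        intro z hz
        exact popStack_anc htrans hpw hz
      · intro x hx
        rcases List.mem_cons.mp hx with rfl | hx'
        · simp
        · exact List.mem_append_left _ (hsub x (popStack_subset hx'))
      · intro y hy x hx hanc
        rw [popStack]
        by_cases hwy : isAncestor G root w y
        · simp only [hwy, if_true]
          rcases List.mem_append.mp hx with hxp | hxw
          · -- x ∈ p, ancestor of y; show x ∈ w :: popped
            have hxw' : isAncestor G root x w := by
              refine hdfs.interval x x w y (anc_refl G root x) hanc ?_ ?_
              · exact le_of_lt (hplt x hxp)
              · exact le_of_lt (hy w (by simp))
            exact List.mem_cons_of_mem _ (hmem w hplt x hxp hxw')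
          · simp at hxw; subst hxw; exact List.mem_cons_self
        · simp only [hwy, if_false]
          rcases List.mem_append.mp hx with hxp | hxw
          · have hxw' : isAncestor G root x w := by
              refine hdfs.interval x x w y (anc_refl G root x) hanc ?_ ?_
              · exact le_of_lt (hplt x hxp)
              · exact le_of_lt (hy w (by simp))
            exact mem_popStack (hmem w hplt x hxp hxw') hanc
          · simp at hxw; subst hxw; exact absurd hanc hwy
    have := ih (p ++ [w]) _ hstep (by simpa using hs)
    simpa using this


/-- when processing `v`, after popping all non-ancestors of `v`,
if the stack is nonempty then its top `u` is an ancestor of `v` and no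
already-processed node lies strictly between `u` and `v` on the tree path. -/
theorem stmt15 (G : SimpleGraph V) (hG : G.IsTree) (root : V) (tin : V → ℕ)
    (hdfs : IsDFSOrder G root tin)
    (lca : V → V → V) (hlca : ∀ u v, isLCA G root u v (lca u v))
    (l : List V) (hnd : l.Nodup)
    (hsort : l.Pairwise fun a b => tin a < tin b)
    (hclosed : ∀ u ∈ l, ∀ v ∈ l, lca u v ∈ l)
    (l1 : List V) (v : V) (l2 : List V) (hsplit : l = l1 ++ v :: l2) :
    ∀ u, (popStack (isAncestor G root) v (runStack (isAncestor G root) l1 [])).head?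
        = some u →
      isAncestor G root u v ∧
        ¬ ∃ x ∈ l1, x ≠ u ∧ x ≠ v ∧ G.dist u x + G.dist x v = G.dist u v := by
  intro u hu
  have hc : G.Connected := hG.isConnected
  have htrans : ∀ a b c, isAncestor G root a b → isAncestor G root b c →
      isAncestor G root a c := fun a b c h1 h2 => anc_trans_s15 hc h1 h2
  rw [hsplit] at hsort
  have hs1 : (([] : List V) ++ l1).Pairwise fun a b => tin a < tin b := by
    simpa using (List.pairwise_append.mp hsort).1
  have hlt : ∀ x ∈ l1, tin x < tin v := by
    intro x hx
    exact (List.pairwise_append.mp hsort).2.2 x hx v List.mem_cons_self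
  have hinv := runStack_inv G hc root tin hdfs l1 [] []
    ⟨by simp, by simp, by simp⟩ hs1
  obtain ⟨hpw, hsub, hmem⟩ := hinv
  set st := runStack (isAncestor G root) l1 [] with hst
  have hpop := popStack_pairwise (anc := isAncestor G root) (v := v) hpw
  cases hcase : popStack (isAncestor G root) v st with
  | nil => rw [hcase] at hu; simp at hu
  | cons a t =>
    rw [hcase] at hu
    simp only [List.head?_cons, Option.some.injEq] at hu
    subst hu
    have huv : isAncestor G root a v :=
      popStack_anc htrans hpw (by rw [hcase]; exact List.mem_cons_self)
    refine ⟨huv, ?_⟩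
    rintro ⟨x, hx1, hxu, hxv, hdist⟩
    obtain ⟨hux, hxv'⟩ := anc_between hc huv hdist
    have hxmem : x ∈ popStack (isAncestor G root) v st := by
      refine hmem v ?_ x (by simpa using hx1) hxv'
      intro y hy
      exact hlt y (by simpa using hy)
    rw [hcase] at hxmem hpop
    rcases List.mem_cons.mp hxmem with rfl | hxt
    · exact hxu rfl
    · have hxu' : isAncestor G root x a := (List.pairwise_cons.mp hpop).1 x hxt
      exact hxu (anc_antisymm_s15 hc hux hxu').symm
end
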